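/- arXiv:1112.4668 — 4 statements merged into one kernel-verified Lean document; each statement's English description precedes it below -/
import Mathlib

section
/- Let R be a principal ideal domain, C_1 a free R-module with basis {e_1}, C_0 a free R-module with basis {f_1,...,f_k} (k ≥ 1), and ∂: C_1 → C_0 an R-linear map with ∂(e_1) = Σ_{i=1}^k a_i f_i where all a_i ≠ 0. If the quotient C_0 / im(∂) is isomorphic to R, then k = 2. -/
theorem acyclic_order_one_single_generator_forces_two
    {R : Type*} [CommRing R] [IsDomain R] [IsPrincipalIdealRing R]
    (k : ℕ) (hk : 1 ≤ k) (a : Fin k → R) (ha : ∀ i, a i ≠ 0)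
    (hH0 : Nonempty (((Fin k → R) ⧸ Submodule.span R {a}) ≃ₗ[R] R)) :
    k = 2 := by
  obtain ⟨eQ⟩ := hH0
  set N : Submodule R (Fin k → R) := Submodule.span R {a}
  have ha0 : a ≠ 0 := by
    intro h
    exact ha ⟨0, hk⟩ (by simp [h])
  -- N ≅ R
  have eN : N ≃ₗ[R] R := (LinearEquiv.toSpanNonzeroSingleton R (Fin k → R) a ha0).symm
  -- quotient projective, splitting
  have hproj : Module.Projective R ((Fin k → R) ⧸ N) := Module.Projective.of_equiv eQ.symm
  obtain ⟨l, hl⟩ := Module.projective_lifting_property N.mkQ LinearMap.id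
    (Submodule.mkQ_surjective N)
  obtain ⟨e, -⟩ := (LinearMap.exact_subtype_mkQ N).splitSurjectiveEquiv
    (Submodule.injective_subtype N) ⟨l, hl⟩
  have efinal : (Fin k → R) ≃ₗ[R] R × R := e.trans (eN.prodCongr eQ)
  have h1 : Module.finrank R (Fin k → R) = k := Module.finrank_fin_fun R
  have h2 : Module.finrank R (R × R) = 2 := by simp
  rw [← h1, efinal.finrank_eq, h2]
end

section
/- Let R be a PID and let ∂_d: C_d → C_{d-1} be an R-linear map between free R-modules, where C_d has basis {e_1,...,e_m, g_1,...,g_n}. Suppose (a) the restriction of ∂_d to the submodule Ĉ_d spanned by e_1,...,e_m is injective, and (b) each g_j is precritical, i.e. there is a nonzero a_j ∈ R with a_j ∂_d(g_j) ∈ ∂_d(Ĉ_d). Then ker ∂_d is a free R-module of rank n. -/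
theorem ker_free_of_rank_n_of_precritical
    {R : Type*} [CommRing R] [IsDomain R] [IsPrincipalIdealRing R]
    {m n : ℕ} {N : Type*} [AddCommGroup N] [Module R N] [Module.Free R N]
    (bd : ((Fin m ⊕ Fin n) → R) →ₗ[R] N)
    (hinj : ∀ x ∈ Submodule.span R
      (Set.range fun i : Fin m => Pi.single (Sum.inl i : Fin m ⊕ Fin n) (1 : R)),
      bd x = 0 → x = 0)
    (hprec : ∀ j : Fin n, ∃ a : R, a ≠ 0 ∧
      a • bd (Pi.single (Sum.inr j) 1) ∈ Submodule.map bd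
        (Submodule.span R
          (Set.range fun i : Fin m => Pi.single (Sum.inl i : Fin m ⊕ Fin n) (1 : R)))) :
    Nonempty (LinearMap.ker bd ≃ₗ[R] (Fin n → R)) := by
  classical
  set S : Submodule R ((Fin m ⊕ Fin n) → R) := Submodule.span R
      (Set.range fun i : Fin m => Pi.single (Sum.inl i : Fin m ⊕ Fin n) (1 : R)) with hS
  -- elements of S vanish on inr coordinates
  have hSvan : ∀ x ∈ S, ∀ j : Fin n, x (Sum.inr j) = 0 := by
    intro x hx j
    have : S ≤ LinearMap.ker (LinearMap.proj (Sum.inr j : Fin m ⊕ Fin n)) := by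
      rw [hS, Submodule.span_le]
      rintro _ ⟨i, rfl⟩
      simp [LinearMap.mem_ker, Pi.single_eq_of_ne]
    simpa using this hx
  -- any x vanishing on all inr coordinates lies in S
  have hmemS : ∀ x : (Fin m ⊕ Fin n) → R, (∀ j, x (Sum.inr j) = 0) → x ∈ S := by
    intro x hx
    have hxe : x = ∑ i : Fin m, x (Sum.inl i) • (Pi.single (Sum.inl i) 1 : (Fin m ⊕ Fin n) → R) := by
      funext k
      rcases k with i | j
      · simp [Finset.sum_apply, Pi.single_apply, Sum.inl.injEq]
      · simp [Finset.sum_apply, Pi.single_apply, hx j]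
    rw [hxe]
    exact Submodule.sum_mem _ fun i _ =>
      Submodule.smul_mem _ _ (Submodule.subset_span ⟨i, rfl⟩)
  -- projection to the g-coordinates
  let p : ((Fin m ⊕ Fin n) → R) →ₗ[R] (Fin n → R) :=
    LinearMap.pi fun j => LinearMap.proj (Sum.inr j)
  let φ : LinearMap.ker bd →ₗ[R] (Fin n → R) := p ∘ₗ (LinearMap.ker bd).subtype
  have hφinj : Function.Injective φ := by
    rw [← LinearMap.ker_eq_bot, LinearMap.ker_eq_bot']
    intro x hx
    have hxS : (x : (Fin m ⊕ Fin n) → R) ∈ S := by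
      apply hmemS
      intro j
      exact congrFun hx j
    have := hinj _ hxS (x.2)
    exact Subtype.ext this
  set P := LinearMap.range φ with hP
  -- elements of the kernel from precriticality
  choose a ha hamem using hprec
  have hkey : ∀ j : Fin n, ∃ k ∈ LinearMap.ker bd,
      p k = a j • (Pi.single j 1 : Fin n → R) := by
    intro j
    obtain ⟨x, hxS, hbx⟩ := hamem j
    refine ⟨a j • (Pi.single (Sum.inr j) 1 : (Fin m ⊕ Fin n) → R) - x, ?_, ?_⟩
    · simp [LinearMap.mem_ker, map_smul, hbx]
    · funext j'
      have hx0 := hSvan x hxS j'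
      simp [p, Pi.single_apply, Sum.inr.injEq, hx0, Pi.smul_apply, smul_eq_mul]
  choose k hk hpk using hkey
  -- linear independence of the images
  have hli : LinearIndependent R fun j : Fin n => a j • (Pi.single j 1 : Fin n → R) := by
    rw [Fintype.linearIndependent_iff]
    intro g hg j
    have := congrFun hg j
    simp [Finset.sum_apply, Pi.single_apply, smul_eq_mul] at this
    rcases this with h | h
    · exact h
    · exact absurd h (ha j)
  -- the family inside P
  have hmemP : ∀ j, a j • (Pi.single j 1 : Fin n → R) ∈ P := by
    intro j
    exact ⟨⟨k j, hk j⟩, hpk j⟩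
  have hliP : LinearIndependent R fun j : Fin n => (⟨a j • (Pi.single j 1 : Fin n → R), hmemP j⟩ : P) := by
    apply LinearIndependent.of_comp P.subtype
    exact hli
  -- finrank computations
  have hfin : Module.Finite R P := by
    infer_instance
  have hfree : Module.Free R P := by
    infer_instance
  have h1 : n ≤ Module.finrank R P := by
    simpa using hliP.fintype_card_le_finrank
  have h2 : Module.finrank R P ≤ n := by
    have := Submodule.finrank_le P
    simpa using this
  have hrank : Module.finrank R P = n := le_antisymm h2 h1
  -- assemble the equivalence
  let e1 : LinearMap.ker bd ≃ₗ[R] P := LinearEquiv.ofInjective φ hφinj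
  let b := Module.Free.chooseBasis R P
  have hcard : Fintype.card (Module.Free.ChooseBasisIndex R P) = n := by
    rw [← Module.finrank_eq_card_chooseBasisIndex, hrank]
  let e2 : P ≃ₗ[R] (Module.Free.ChooseBasisIndex R P → R) := b.equivFun
  let e3 : (Module.Free.ChooseBasisIndex R P → R) ≃ₗ[R] (Fin n → R) :=
    LinearEquiv.funCongrLeft R R (Fintype.equivFinOfCardEq hcard).symm
  exact ⟨e1.trans (e2.trans e3)⟩
end

section
/- Let R be a PID and ∂_d: C_d → C_{d-1} an R-linear map between free R-modules with basis of C_d given by {e_1,...,e_m, g_1,...,g_n}, such that ∂_d restricted to Ĉ_d = span(e_1,...,e_m) is injective, and for each j there exist a_i ∈ R with ∂_d(g_j) = Σ_i a_i ∂_d(e_i) (each g_j is critical). Then there exist unique elements ρ_1,...,ρ_n ∈ ker ∂_d such that the coefficient of g_j in ρ_i (with respect to the given basis) is δ_{ij}, and {ρ_1,...,ρ_n} is a basis of ker ∂_d. -/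
/-- Any vector with vanishing `inr` coordinates lies in the span of the `inl` basis vectors. -/
lemma mem_span_inl_of_inr_zero {R : Type*} [CommRing R] {m n : ℕ}
    (x : (Fin m ⊕ Fin n) → R) (hx : ∀ j, x (Sum.inr j) = 0) :
    x ∈ Submodule.span R
      (Set.range fun i : Fin m => Pi.single (Sum.inl i : Fin m ⊕ Fin n) (1 : R)) := by
  have hxe : x = ∑ i : Fin m, x (Sum.inl i) • (Pi.single (Sum.inl i) 1 : (Fin m ⊕ Fin n) → R) := by
    funext s
    cases s with
    | inl i =>
      simp [Pi.single_apply, Finset.sum_ite_eq']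
    | inr j =>
      simp [Pi.single_apply, hx j]
  rw [hxe]
  exact Submodule.sum_mem _ fun i _ =>
    Submodule.smul_mem _ _ (Submodule.subset_span ⟨i, rfl⟩)

theorem basis_of_kernel_from_critical_elements
    {R : Type*} [CommRing R] [IsDomain R] [IsPrincipalIdealRing R]
    {m n : ℕ} {N : Type*} [AddCommGroup N] [Module R N]
    (bd : ((Fin m ⊕ Fin n) → R) →ₗ[R] N)
    (hinj : ∀ x ∈ Submodule.span R
      (Set.range fun i : Fin m => Pi.single (Sum.inl i : Fin m ⊕ Fin n) (1 : R)),
      bd x = 0 → x = 0)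
    (hcrit : ∀ j : Fin n, ∃ a : Fin m → R,
      bd (Pi.single (Sum.inr j) 1) = ∑ i : Fin m, a i • bd (Pi.single (Sum.inl i) 1)) :
    ∃ ρ : Fin n → LinearMap.ker bd,
      (∀ i j : Fin n, (ρ i : (Fin m ⊕ Fin n) → R) (Sum.inr j) =
        if i = j then 1 else 0) ∧
      (∀ σ : Fin n → LinearMap.ker bd,
        (∀ i j : Fin n, (σ i : (Fin m ⊕ Fin n) → R) (Sum.inr j) =
          if i = j then 1 else 0) → σ = ρ) ∧
      LinearIndependent R ρ ∧
      Submodule.span R (Set.range ρ) = ⊤ := by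
  choose a ha using hcrit
  -- define the candidate elements
  set f : Fin n → (Fin m ⊕ Fin n) → R :=
    fun j => Pi.single (Sum.inr j) 1 - ∑ i : Fin m, a j i • (Pi.single (Sum.inl i) 1 : (Fin m ⊕ Fin n) → R) with hf
  have hker : ∀ j, f j ∈ LinearMap.ker bd := by
    intro j
    simp only [LinearMap.mem_ker, hf, map_sub, map_sum, map_smul, ha j, sub_self]
  have hfval : ∀ i j : Fin n, f i (Sum.inr j) = if i = j then 1 else 0 := by
    intro i j
    simp only [hf]
    simp [Pi.single_apply, Sum.inr.injEq, eq_comm]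
  set ρ : Fin n → LinearMap.ker bd := fun j => ⟨f j, hker j⟩ with hρ
  have hcoord : ∀ i j : Fin n, (ρ i : (Fin m ⊕ Fin n) → R) (Sum.inr j) =
      if i = j then 1 else 0 := hfval
  refine ⟨ρ, hcoord, ?_, ?_, ?_⟩
  · -- uniqueness
    intro σ hσ
    funext i
    have h0 : ∀ j, ((σ i : (Fin m ⊕ Fin n) → R) - (ρ i : (Fin m ⊕ Fin n) → R)) (Sum.inr j) = 0 := by
      intro j
      simp [hσ i j, hfval i j, hcoord i j]
    have hmem := mem_span_inl_of_inr_zero _ h0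
    have hker0 : bd ((σ i : (Fin m ⊕ Fin n) → R) - (ρ i : (Fin m ⊕ Fin n) → R)) = 0 := by
      rw [map_sub, (σ i).2, (ρ i).2, sub_self]
    have := hinj _ hmem hker0
    exact Subtype.ext (sub_eq_zero.mp this)
  · -- linear independence
    rw [linearIndependent_iff']
    intro s c hc j hj
    have : ((∑ i ∈ s, c i • ρ i : LinearMap.ker bd) : (Fin m ⊕ Fin n) → R) (Sum.inr j) = 0 := by
      rw [hc]; rfl
    rw [AddSubmonoidClass.coe_finset_sum] at this
    simp only [Finset.sum_apply, Submodule.coe_smul, Pi.smul_apply, hfval, smul_eq_mul,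
      mul_ite, mul_one, mul_zero, Finset.sum_ite_eq', hj, if_true] at this
    simpa [hfval, hcoord, mul_ite, Finset.sum_ite_eq', hj] using this
  · -- span
    rw [Submodule.eq_top_iff']
    intro x
    have hrepr : (x : (Fin m ⊕ Fin n) → R) - ∑ j : Fin n, (x : (Fin m ⊕ Fin n) → R) (Sum.inr j) • (ρ j : (Fin m ⊕ Fin n) → R) ∈
        Submodule.span R (Set.range fun i : Fin m => Pi.single (Sum.inl i : Fin m ⊕ Fin n) (1 : R)) := by
      apply mem_span_inl_of_inr_zero
      intro j
      simp [hfval, hcoord, mul_ite, Finset.sum_ite_eq', Pi.single_apply]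
    have hkerd : bd ((x : (Fin m ⊕ Fin n) → R) - ∑ j : Fin n, (x : (Fin m ⊕ Fin n) → R) (Sum.inr j) • (ρ j : (Fin m ⊕ Fin n) → R)) = 0 := by
      rw [map_sub, map_sum]
      have hx0 : bd (x : (Fin m ⊕ Fin n) → R) = 0 := x.2
      simp [hx0, fun j => LinearMap.mem_ker.mp (hker j)]
    have h0 := hinj _ hrepr hkerd
    have hx : x = ∑ j : Fin n, (x : (Fin m ⊕ Fin n) → R) (Sum.inr j) • ρ j := by
      apply Subtype.ext
      rw [AddSubmonoidClass.coe_finset_sum]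
      have := sub_eq_zero.mp h0
      simpa using this
    rw [hx]
    exact Submodule.sum_mem _ fun j _ =>
      Submodule.smul_mem _ _ (Submodule.subset_span ⟨j, rfl⟩)
end

section
/- Every cone chain complex over a principal ideal domain R is acyclic, i.e. H_0(C) ≅ R and H_ν(C) = 0 for all ν ≥ 1. -/
/-- A cone chain complex over a principal ideal domain is acyclic. Here the
chain complex has chain modules `C ν = Fin (k ν) → R`, boundary maps
`bd ν : C (ν + 1) → C ν`, and is finite of order `d`. -/
theorem cone_is_acyclic
    {R : Type*} [CommRing R] [IsDomain R] [IsPrincipalIdealRing R]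
    (d : ℕ) (k : ℕ → ℕ) (hk : ∀ ν, d < ν → k ν = 0) (hkd : 0 < k d)
    (bd : ∀ ν : ℕ, (Fin (k (ν + 1)) → R) →ₗ[R] (Fin (k ν) → R))
    (hcc : ∀ ν, (bd ν).comp (bd (ν + 1)) = 0)
    (S : ∀ ν, Set (Fin (k ν)))
    -- cone condition (1): for every `1 ≤ ν + 1 ≤ d`, `S (ν+1)` is nonempty, ...
    (hS1 : ∀ ν, ν + 1 ≤ d → (S (ν + 1)).Nonempty)
    -- (1a): every `e ∈ S (ν+1)` has a boundary support point private to it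
    (hS1a : ∀ ν, ν + 1 ≤ d → ∀ e ∈ S (ν + 1),
      ¬ ({i | bd ν (Pi.single e 1) i ≠ 0} ⊆
          {i | ∃ f ∈ S (ν + 1), f ≠ e ∧ bd ν (Pi.single f 1) i ≠ 0}))
    -- (1b): every basis element outside `S (ν+1)` is, up to a unit and a
    -- correction in the span of `S (ν+1)`, a boundary
    (hS1b : ∀ ν, ν + 1 ≤ d → ∀ e, e ∉ S (ν + 1) →
      ∃ (τ : Fin (k (ν + 2)) → R) (c : R) (r : Fin (k (ν + 1)) → R),
        IsUnit c ∧
        r ∈ Submodule.span R {x : Fin (k (ν + 1)) → R | ∃ f ∈ S (ν + 1), x = Pi.single f 1} ∧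
        bd (ν + 1) τ = c • (Pi.single e 1 : Fin (k (ν + 1)) → R) + r)
    -- cone condition (2): boundaries of non-cycles in `C 1` have support of size ≥ 2
    (hS2 : ∀ σ : Fin (k 1) → R, bd 0 σ ≠ 0 → 2 ≤ Set.ncard {i | bd 0 σ i ≠ 0})
    -- cone condition (3)
    (hS0 : ∃ e₀ : Fin (k 0), S 0 = {e₀} ∧ ∀ e : Fin (k 0), e ≠ e₀ →
      ∃ (τ : Fin (k 1) → R) (c c₀ : R), IsUnit c ∧ c₀ ≠ 0 ∧
        bd 0 τ = c • (Pi.single e 1 : Fin (k 0) → R) + c₀ • (Pi.single e₀ 1 : Fin (k 0) → R)) :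
    -- acyclicity: `H 0 ≅ R` and `H ν = 0` for `ν ≥ 1`
    Nonempty (((Fin (k 0) → R) ⧸ LinearMap.range (bd 0)) ≃ₗ[R] R) ∧
    ∀ ν : ℕ, LinearMap.ker (bd ν) = LinearMap.range (bd (ν + 1)) := by
  -- support of elements of the span of singles
  have hspan : ∀ (n : ℕ) (T : Set (Fin n)) (x : Fin n → R),
      x ∈ Submodule.span R {y : Fin n → R | ∃ f ∈ T, y = Pi.single f 1} →
      ∀ j ∉ T, x j = 0 := by
    intro n T x hx j hj
    induction hx using Submodule.span_induction with
    | mem y hy => obtain ⟨f, hf, rfl⟩ := hy; simp only [Pi.single_apply]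
                  rw [if_neg]; rintro rfl; exact hj hf
    | zero => rfl
    | add a b _ _ ha hb => simp [ha, hb]
    | smul c a _ ha => simp [ha]
  have hdecomp : ∀ (n : ℕ) (s : Fin n → R),
      s = ∑ f, s f • (Pi.single f 1 : Fin n → R) := by
    intro n s; ext j; simp [Finset.sum_apply, Pi.single_apply]
  constructor
  · -- H₀ ≅ R
    obtain ⟨e₀, hSe, h0⟩ := hS0
    set Q := (Fin (k 0) → R) ⧸ LinearMap.range (bd 0)
    set ψ : R →ₗ[R] Q :=
      (LinearMap.range (bd 0)).mkQ ∘ₗ LinearMap.toSpanSingleton R _ (Pi.single e₀ 1) with hψ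
    have hψ_apply : ∀ r : R, ψ r = Submodule.Quotient.mk (r • (Pi.single e₀ 1 : Fin (k 0) → R)) :=
      fun r => rfl
    have hinj : Function.Injective ψ := by
      rw [injective_iff_map_eq_zero]
      intro r hr
      rw [hψ_apply, Submodule.Quotient.mk_eq_zero] at hr
      obtain ⟨σ, hσ⟩ := hr
      by_contra hr0
      have hne : bd 0 σ ≠ 0 := by
        rw [hσ]
        intro h
        have := congrFun h e₀
        simp [Pi.single_apply] at this
        exact hr0 this
      have h2 := hS2 σ hne
      have hset : {i | bd 0 σ i ≠ 0} = {e₀} := by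
        rw [hσ]; ext i
        simp only [Set.mem_setOf_eq, Set.mem_singleton_iff, Pi.smul_apply, Pi.single_apply,
          smul_eq_mul]
        constructor
        · intro h; by_contra hne'; rw [if_neg hne'] at h; simp at h
        · rintro rfl; simp [hr0]
      rw [hset, Set.ncard_singleton] at h2
      omega
    have hsurj : Function.Surjective ψ := by
      rw [← LinearMap.range_eq_top, ← top_le_iff]
      rintro x -
      induction x using Submodule.Quotient.induction_on with
      | _ z =>
        rw [show z = ∑ f, z f • (Pi.single f 1 : Fin (k 0) → R) from hdecomp _ z,
          ← Submodule.mkQ_apply, map_sum]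
        apply Submodule.sum_mem
        intro e _
        rw [map_smul]
        apply Submodule.smul_mem
        rw [Submodule.mkQ_apply]
        by_cases he : e = e₀
        · subst he; exact ⟨1, by rw [hψ_apply]; simp⟩
        · obtain ⟨τ, c, c₀, hc, hc₀, heq⟩ := h0 e he
          obtain ⟨u, rfl⟩ := hc
          refine ⟨-((↑u⁻¹ : R) * c₀), ?_⟩
          have hrepr : (Pi.single e 1 : Fin (k 0) → R)
              = (↑u⁻¹ : R) • (bd 0 τ) - ((↑u⁻¹ : R) * c₀) • (Pi.single e₀ 1 : Fin (k 0) → R) := by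
            rw [heq, smul_add, smul_smul, smul_smul, Units.inv_mul, one_smul, mul_smul]
            abel
          rw [hψ_apply, hrepr, Submodule.Quotient.eq]
          have hsimp : (-((↑u⁻¹ : R) * c₀)) • (Pi.single e₀ 1 : Fin (k 0) → R)
              - ((↑u⁻¹ : R) • (bd 0 τ) - ((↑u⁻¹ : R) * c₀) • (Pi.single e₀ 1 : Fin (k 0) → R))
              = -((↑u⁻¹ : R) • (bd 0 τ)) := by
            rw [neg_smul]; abel
          rw [hsimp]
          exact Submodule.neg_mem _ (Submodule.smul_mem _ _ ⟨τ, rfl⟩)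
    exact ⟨(LinearEquiv.ofBijective ψ ⟨hinj, hsurj⟩).symm⟩
  · -- higher homology
    intro ν
    by_cases hν : ν + 1 ≤ d
    · apply le_antisymm
      · -- ker ≤ range
        intro z hz
        have hz0 : bd ν z = 0 := hz
        -- decomposition of C (ν+1)
        have htop : (⊤ : Submodule R (Fin (k (ν+1)) → R)) ≤
            LinearMap.range (bd (ν+1)) ⊔
            Submodule.span R {x : Fin (k (ν + 1)) → R | ∃ f ∈ S (ν + 1), x = Pi.single f 1} := by
          rintro x -
          rw [show x = ∑ f, x f • (Pi.single f 1 : Fin (k (ν+1)) → R) from hdecomp _ x]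
          apply Submodule.sum_mem
          intro e _
          apply Submodule.smul_mem
          by_cases he : e ∈ S (ν + 1)
          · exact Submodule.mem_sup_right (Submodule.subset_span ⟨e, he, rfl⟩)
          · obtain ⟨τ, c, r, hc, hr, heq⟩ := hS1b ν hν e he
            obtain ⟨u, rfl⟩ := hc
            have : (Pi.single e 1 : Fin (k (ν+1)) → R)
                = (↑u⁻¹ : R) • (bd (ν+1) τ) - (↑u⁻¹ : R) • r := by
              rw [heq, smul_add, smul_smul, Units.inv_mul, one_smul]
              abel
            rw [this]
            exact Submodule.sub_mem _
              (Submodule.mem_sup_left (Submodule.smul_mem _ _ ⟨τ, rfl⟩))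
              (Submodule.mem_sup_right (Submodule.smul_mem _ _ hr))
        obtain ⟨b, hb, s, hs, hbs⟩ := Submodule.mem_sup.mp (htop (Submodule.mem_top : z ∈ ⊤))
        obtain ⟨τ, hτ⟩ := hb
        -- s is a cycle supported on S (ν+1)
        have hb0 : bd ν b = 0 := by
          rw [← hτ, ← LinearMap.comp_apply, hcc ν]; rfl
        have hsbd : bd ν s = 0 := by
          have h1 : bd ν b + bd ν s = bd ν z := by rw [← map_add, hbs]
          rw [hb0, hz0, zero_add] at h1; exact h1
        have hs0 : s = 0 := by
          by_contra hne
          obtain ⟨e, hse⟩ := Function.ne_iff.mp hne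
          have heS : e ∈ S (ν + 1) := by
            by_contra h
            exact hse (hspan _ _ s hs e h)
          have hpriv := hS1a ν hν e heS
          rw [Set.not_subset] at hpriv
          obtain ⟨i, hi1, hi2⟩ := hpriv
          simp only [Set.mem_setOf_eq, not_exists, not_and, ne_eq, not_not] at hi1 hi2
          have hcalc : bd ν s i = ∑ f, s f * bd ν (Pi.single f 1) i := by
            conv_lhs => rw [hdecomp _ s]
            rw [map_sum, Finset.sum_apply]
            simp [map_smul]
          rw [Finset.sum_eq_single e (fun f _ hfe => ?_) (fun h => absurd (Finset.mem_univ e) h)]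
            at hcalc
          · rw [hsbd] at hcalc
            exact mul_ne_zero hse hi1 (by simpa using hcalc.symm)
          · by_cases hfS : f ∈ S (ν + 1)
            · rw [hi2 f hfS hfe, mul_zero]
            · rw [hspan _ _ s hs f hfS, zero_mul]
        exact ⟨τ, by rw [hτ, ← hbs, hs0, add_zero]⟩
      · exact LinearMap.range_le_ker_iff.mpr (hcc ν)
    · -- trivial degrees
      have hk0 : k (ν + 1) = 0 := hk _ (by omega)
      have : ∀ x : Fin (k (ν+1)) → R, x = 0 := by
        intro x; funext i; exact absurd i.isLt (by omega)
      apply le_antisymm <;> intro x hx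
      · exact (this x) ▸ (Submodule.zero_mem _)
      · rw [this x]; exact Submodule.zero_mem _
end
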